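/- arXiv:2206.12210 — 3 statements merged into one kernel-verified Lean document; each statement's English description precedes it below -/
import Mathlib

section
/- Let V = I ∪ A ∪ B be a partition of an n-vertex set with |I| = k − 1 and |A| = ⌈k/2⌉, and let H be the graph with edge set consisting of all pairs {x,y} with x ∈ I, y ∈ A, together with all pairs within A ∪ B. Then α(H) = k, δ(H) ≥ k/2, and deleting A from H leaves a graph with exactly k connected components (the k−1 isolated vertices of I plus the clique on B); in particular H is not 1-tough when k > ⌈k/2⌉, hence H is not Hamiltonian. -/
/-- The independence number of a graph: the largest size of a set of pairwise
non-adjacent vertices. -/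
noncomputable def indepNum {V : Type*} [Fintype V] (G : SimpleGraph V) : ℕ :=
  sSup {k | ∃ s : Finset V, (∀ u ∈ s, ∀ v ∈ s, u ≠ v → ¬ G.Adj u v) ∧ s.card = k}

/-- A function constant on edges of a graph is constant on walks. -/
lemma walk_const_aux {V' : Type*} {G : SimpleGraph V'} {β : Sort*} (f : V' → β)
    (hf : ∀ x y, G.Adj x y → f x = f y) : ∀ {x y : V'} (_ : G.Walk x y), f x = f y := by
  intro x y w
  induction w with
  | nil => rfl
  | cons h p ih => exact (hf _ _ h).trans ih

/-- Let `V = I ∪ A ∪ B` be a partition with `|I| = k − 1`, `|A| = ⌈k/2⌉`, `B ≠ ∅`, and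
let `H` have as edges all pairs between `I` and `A` together with all pairs inside
`A ∪ B`.  Then `α(H) = k`, `δ(H) ≥ k/2`, deleting `A` leaves exactly `k` connected
components, and `H` is not Hamiltonian. -/
theorem stmt15 {V : Type*} [Fintype V] [DecidableEq V] (n k : ℕ)
    (hn : Fintype.card V = n) (hk : 2 ≤ k)
    (I A B : Finset V) (hIA : Disjoint I A) (hIB : Disjoint I B) (hAB : Disjoint A B)
    (hcover : I ∪ A ∪ B = Finset.univ)
    (hI : I.card = k - 1) (hA : A.card = (k + 1) / 2) (hB : B.Nonempty)
    (H : SimpleGraph V) [DecidableRel H.Adj]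
    (hH : ∀ x y : V, H.Adj x y ↔ x ≠ y ∧
      ((x ∈ I ∧ y ∈ A) ∨ (x ∈ A ∧ y ∈ I) ∨ (x ∈ A ∪ B ∧ y ∈ A ∪ B))) :
    indepNum H = k ∧ k / 2 ≤ H.minDegree ∧
      Nat.card ((H.induce ((↑A : Set V)ᶜ)).ConnectedComponent) = k ∧
      ¬ H.IsHamiltonian := by
  classical
  obtain ⟨b0, hb0⟩ := hB
  have hIA' : ∀ x : V, x ∈ I → x ∈ A → False := fun x hx ha =>
    Finset.disjoint_left.mp hIA hx ha
  have hIB' : ∀ x : V, x ∈ I → x ∈ B → False := fun x hx hb =>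
    Finset.disjoint_left.mp hIB hx hb
  have hAB' : ∀ x : V, x ∈ A → x ∈ B → False := fun x hx hb =>
    Finset.disjoint_left.mp hAB hx hb
  have hmem : ∀ x : V, x ∈ I ∨ x ∈ A ∨ x ∈ B := by
    intro x
    have hx : x ∈ I ∪ A ∪ B := by rw [hcover]; exact Finset.mem_univ x
    simpa [Finset.mem_union, or_assoc] using hx
  have hb0I : b0 ∉ I := fun h => hIB' b0 h hb0
  have hb0A : b0 ∉ A := fun h => hAB' b0 h hb0
  have hcardV : Fintype.card V = I.card + A.card + B.card := by
    rw [← Finset.card_univ, ← hcover]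
    rw [Finset.card_union_of_disjoint (Finset.disjoint_union_left.mpr ⟨hIB, hAB⟩),
      Finset.card_union_of_disjoint hIA]
  have hBpos : 1 ≤ B.card := Finset.card_pos.mpr ⟨b0, hb0⟩
  -- the key independent set
  have hindep : ∀ u ∈ insert b0 I, ∀ v ∈ insert b0 I, u ≠ v → ¬ H.Adj u v := by
    intro u hu v hv huv hadj
    rw [hH] at hadj
    rcases Finset.mem_insert.mp hu with rfl | huI
    · rcases Finset.mem_insert.mp hv with rfl | hvI
      · exact huv rfl
      · rcases hadj.2 with ⟨h1, _⟩ | ⟨h1, _⟩ | ⟨_, h2⟩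
        · exact hb0I h1
        · exact hb0A h1
        · rcases Finset.mem_union.mp h2 with h | h
          · exact hIA' v hvI h
          · exact hIB' v hvI h
    · rcases Finset.mem_insert.mp hv with rfl | hvI
      · rcases hadj.2 with ⟨_, h2⟩ | ⟨h1, _⟩ | ⟨h1, _⟩
        · exact hb0A h2
        · exact hIA' u huI h1
        · rcases Finset.mem_union.mp h1 with h | h
          · exact hIA' u huI h
          · exact hIB' u huI h
      · rcases hadj.2 with ⟨_, h2⟩ | ⟨h1, _⟩ | ⟨h1, _⟩
        · exact hIA' v hvI h2
        · exact hIA' u huI h1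
        · rcases Finset.mem_union.mp h1 with h | h
          · exact hIA' u huI h
          · exact hIB' u huI h
  have hcardins : (insert b0 I).card = k := by
    rw [Finset.card_insert_of_notMem hb0I, hI]; omega
  -- upper bound for independent sets
  have hub : ∀ m ∈ {m | ∃ s : Finset V,
      (∀ u ∈ s, ∀ v ∈ s, u ≠ v → ¬ H.Adj u v) ∧ s.card = m}, m ≤ k := by
    rintro m ⟨s, hs, rfl⟩
    have hsub : s ⊆ s ∩ I ∪ s ∩ (A ∪ B) := by
      intro x hx
      rcases hmem x with h | h | h
      · exact Finset.mem_union_left _ (Finset.mem_inter.mpr ⟨hx, h⟩)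
      · exact Finset.mem_union_right _
          (Finset.mem_inter.mpr ⟨hx, Finset.mem_union_left _ h⟩)
      · exact Finset.mem_union_right _
          (Finset.mem_inter.mpr ⟨hx, Finset.mem_union_right _ h⟩)
    have hone : (s ∩ (A ∪ B)).card ≤ 1 := by
      apply Finset.card_le_one.mpr
      intro a ha b hb
      by_contra hne
      have ha' := Finset.mem_inter.mp ha
      have hb' := Finset.mem_inter.mp hb
      exact hs a ha'.1 b hb'.1 hne ((hH a b).mpr ⟨hne, Or.inr (Or.inr ⟨ha'.2, hb'.2⟩)⟩)
    calc s.card ≤ (s ∩ I ∪ s ∩ (A ∪ B)).card := Finset.card_le_card hsub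
      _ ≤ (s ∩ I).card + (s ∩ (A ∪ B)).card := Finset.card_union_le _ _
      _ ≤ I.card + 1 := by
          exact Nat.add_le_add (Finset.card_le_card (Finset.inter_subset_right)) hone
      _ ≤ k := by omega
  refine ⟨?_, ?_, ?_, ?_⟩
  · -- independence number
    apply le_antisymm
    · exact csSup_le ⟨0, ⟨∅, by simp⟩⟩ hub
    · exact le_csSup ⟨k, hub⟩ ⟨insert b0 I, hindep, hcardins⟩
  · -- min degree
    have : Nonempty V := ⟨b0⟩
    apply SimpleGraph.le_minDegree_of_forall_le_degree
    intro v
    have hdeg : H.degree v = (H.neighborFinset v).card := rfl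
    rcases hmem v with h | h | h
    · have hsub : A ⊆ H.neighborFinset v := by
        intro a ha
        rw [SimpleGraph.mem_neighborFinset, hH]
        exact ⟨fun he => hIA' v h (he ▸ ha), Or.inl ⟨h, ha⟩⟩
      have := Finset.card_le_card hsub
      rw [← hdeg] at this
      omega
    · have hsub : I ⊆ H.neighborFinset v := by
        intro a ha
        rw [SimpleGraph.mem_neighborFinset, hH]
        exact ⟨fun he => hIA' a ha (he ▸ h), Or.inr (Or.inl ⟨h, ha⟩)⟩
      have := Finset.card_le_card hsub
      rw [← hdeg] at this
      omega
    · have hsub : A ⊆ H.neighborFinset v := by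
        intro a ha
        rw [SimpleGraph.mem_neighborFinset, hH]
        exact ⟨fun he => hAB' v (he ▸ ha) h,
          Or.inr (Or.inr ⟨Finset.mem_union_right _ h, Finset.mem_union_left _ ha⟩)⟩
      have := Finset.card_le_card hsub
      rw [← hdeg] at this
      omega
  · -- connected components
    set G2 := H.induce ((↑A : Set V)ᶜ) with hG2
    have hb0c : b0 ∈ ((↑A : Set V)ᶜ) := by simpa using hb0A
    have hJA : ∀ x ∈ insert b0 I, x ∈ ((↑A : Set V)ᶜ) := by
      intro x hx
      rcases Finset.mem_insert.mp hx with rfl | hxI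
      · exact hb0c
      · simpa using fun h => hIA' x hxI h
    set Φ : ((insert b0 I : Finset V) : Type _) → G2.ConnectedComponent :=
      fun x => G2.connectedComponentMk ⟨(x : V), hJA x x.2⟩ with hΦ
    have hG2adj : ∀ (x y : ((↑A : Set V)ᶜ : Set V)), G2.Adj x y → H.Adj x y := by
      intro x y h; exact h
    set fB : ((↑A : Set V)ᶜ : Set V) → V := fun x => if (x : V) ∈ B then b0 else x with hfB
    have hstep : ∀ x y, G2.Adj x y → fB x = fB y := by
      intro x y hadj
      have hxy : H.Adj x y := hG2adj x y hadj
      rw [hH] at hxy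
      have hxA : (x : V) ∉ A := fun h => x.2 h
      have hyA : (y : V) ∉ A := fun h => y.2 h
      rcases hxy.2 with ⟨_, h2⟩ | ⟨h1, _⟩ | ⟨h1, h2⟩
      · exact absurd h2 hyA
      · exact absurd h1 hxA
      · have hxB : (x : V) ∈ B := by
          rcases Finset.mem_union.mp h1 with h | h
          · exact absurd h hxA
          · exact h
        have hyB : (y : V) ∈ B := by
          rcases Finset.mem_union.mp h2 with h | h
          · exact absurd h hyA
          · exact h
        simp [hfB, hxB, hyB]
    have hreach : ∀ x y, G2.Reachable x y → fB x = fB y := by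
      intro x y h
      exact h.elim fun w => walk_const_aux fB hstep w
    have hfBval : ∀ (x : V) (hx : x ∈ insert b0 I) (hx' : x ∈ ((↑A : Set V)ᶜ)),
        fB ⟨x, hx'⟩ = x := by
      intro x hx hx'
      rcases Finset.mem_insert.mp hx with rfl | hxI
      · simp [hfB]
      · have : x ∉ B := fun h => hIB' x hxI h
        simp [hfB, this]
    have hbij : Function.Bijective Φ := by
      constructor
      · intro x y hxy
        have hr := SimpleGraph.ConnectedComponent.exact hxy
        have := hreach _ _ hr
        rw [hfBval _ x.2 _, hfBval _ y.2 _] at this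
        exact Subtype.ext this
      · intro c
        obtain ⟨x, rfl⟩ := c.exists_rep
        rcases hmem (x : V) with h | h | h
        · refine ⟨⟨(x : V), Finset.mem_insert_of_mem h⟩, ?_⟩
          simp only [hΦ]
          exact congrArg G2.connectedComponentMk (Subtype.ext rfl)
        · exact absurd h (fun h' => x.2 h')
        · refine ⟨⟨b0, Finset.mem_insert_self _ _⟩, ?_⟩
          simp only [hΦ]
          by_cases hxb : (x : V) = b0
          · exact congrArg G2.connectedComponentMk (Subtype.ext hxb.symm)
          · apply SimpleGraph.ConnectedComponent.sound
            have hadj : G2.Adj ⟨b0, hJA b0 (Finset.mem_insert_self _ _)⟩ x := by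
              show H.Adj b0 (x : V)
              rw [hH]
              exact ⟨fun he => hxb he.symm,
                Or.inr (Or.inr ⟨Finset.mem_union_right _ hb0,
                  Finset.mem_union_right _ h⟩)⟩
            exact hadj.reachable
    have := Nat.card_eq_of_bijective Φ hbij
    rw [Nat.card_eq_fintype_card, Fintype.card_coe, hcardins] at this
    rw [← this]
  · -- not Hamiltonian
    intro hham
    have hApos : 1 ≤ A.card := by omega
    have hIpos : 1 ≤ I.card := by omega
    have hcardne : Fintype.card V ≠ 1 := by omega
    obtain ⟨v, p, hp⟩ := hham hcardne
    obtain ⟨hcyc, hcount⟩ :=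
      SimpleGraph.Walk.isHamiltonianCycle_iff_isCycle_and_support_count_tail_eq_one.mp hp
    set M : Multiset H.Dart := ↑p.darts with hM
    have hTmul : (↑p.support.tail : Multiset V) = Finset.univ.val := by
      apply Multiset.ext.mpr
      intro a
      rw [Multiset.coe_count, hcount a]
      exact (Multiset.count_eq_one_of_mem Finset.univ.nodup (Finset.mem_univ a)).symm
    have hsndM : M.map (·.snd) = Finset.univ.val := by
      rw [hM, Multiset.map_coe, p.map_snd_darts, hTmul]
    have hfstM : M.map (·.fst) = Finset.univ.val := by
      have h1 := p.map_fst_darts_append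
      have h2 := p.support_eq_cons
      have h4 : (↑(p.darts.map (·.fst) ++ [v]) : Multiset V) =
          ↑(v :: p.support.tail) :=
        congrArg (fun l : List V => (l : Multiset V)) (h1.trans h2)
      have h3 : (↑(p.darts.map (·.fst)) : Multiset V) + {v} =
          {v} + (↑p.support.tail : Multiset V) := by
        calc (↑(p.darts.map (·.fst)) : Multiset V) + {v}
            = ↑(p.darts.map (·.fst)) + ↑[v] := by rw [Multiset.coe_singleton]
          _ = ↑(p.darts.map (·.fst) ++ [v]) := Multiset.coe_add _ _
          _ = ↑(v :: p.support.tail) := h4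
          _ = v ::ₘ ↑p.support.tail := (Multiset.cons_coe _ _).symm
          _ = {v} + ↑p.support.tail := by rw [Multiset.singleton_add]
      rw [hM, Multiset.map_coe]
      rw [add_comm ({v} : Multiset V) _] at h3
      have := add_right_cancel h3
      rw [this, hTmul]
    have key : ∀ (f : H.Dart → V), M.map f = Finset.univ.val → ∀ s : Finset V,
        Multiset.countP (fun d => f d ∈ s) M = s.card := by
      intro f hf s
      have h1 := Multiset.countP_map f M (fun a => a ∈ s)
      rw [hf, ← Multiset.countP_eq_card_filter] at h1
      rw [← h1, Multiset.countP_eq_card_filter]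
      have h2 : Finset.univ.val.filter (fun a => a ∈ s) = s.val := by
        have h3 : Finset.univ.filter (fun a => a ∈ s) = s := by
          ext a; simp
        calc Finset.univ.val.filter (fun a => a ∈ s)
            = (Finset.univ.filter (fun a => a ∈ s)).val := rfl
          _ = s.val := by rw [h3]
      rw [h2]
      rfl
    have keyfst : ∀ s : Finset V,
        Multiset.countP (fun d : H.Dart => d.fst ∈ s) M = s.card := fun s => key _ hfstM s
    have keysnd : ∀ s : Finset V,
        Multiset.countP (fun d : H.Dart => d.snd ∈ s) M = s.card := fun s => key _ hsndM s
    have hIimpA : ∀ d : H.Dart, d ∈ M → d.fst ∈ I → d.snd ∈ A := by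
      intro d hd hdI
      have hadj := d.adj
      rw [hH] at hadj
      rcases hadj.2 with ⟨_, h2⟩ | ⟨h1, _⟩ | ⟨h1, _⟩
      · exact h2
      · exact absurd h1 (fun h => hIA' d.fst hdI h)
      · rcases Finset.mem_union.mp h1 with h | h
        · exact absurd h (fun h => hIA' d.fst hdI h)
        · exact absurd h (fun h => hIB' d.fst hdI h)
    have hsplit := Multiset.countP_eq_countP_filter_add M
      (fun d : H.Dart => d.snd ∈ A) (fun d : H.Dart => d.fst ∈ I)
    have hterm1 : Multiset.countP (fun d : H.Dart => d.snd ∈ A)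
        (M.filter (fun d => d.fst ∈ I)) = I.card := by
      rw [Multiset.countP_eq_card.mpr]
      · rw [← Multiset.countP_eq_card_filter]
        exact keyfst I
      · intro d hd
        have hd' := Multiset.mem_filter.mp hd
        exact hIimpA d hd'.1 hd'.2
    have htotal : Multiset.countP (fun d : H.Dart => d.snd ∈ A) M = A.card := keysnd A
    set j := Multiset.countP (fun d : H.Dart => d.snd ∈ A)
      (M.filter (fun d => ¬ d.fst ∈ I)) with hj
    have heq : A.card = I.card + j := by
      rw [← htotal, hsplit, hterm1]
    by_cases hk3 : k ≤ 3
    · have hjz : j = 0 := by omega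
      have hBclose : ∀ d : H.Dart, d ∈ p.darts → d.fst ∈ B → d.snd ∈ B := by
        intro d hd hdB
        have hdM : d ∈ M := by rw [hM]; exact hd
        have hadj := d.adj
        rw [hH] at hadj
        have hfstnI : d.fst ∉ I := fun h => hIB' d.fst h hdB
        have hsnAB : d.snd ∈ A ∪ B := by
          rcases hadj.2 with ⟨h1, _⟩ | ⟨h1, _⟩ | ⟨_, h2⟩
          · exact absurd h1 hfstnI
          · exact absurd h1 (fun h => hAB' d.fst h hdB)
          · exact h2
        have hsndnA : d.snd ∉ A := by
          intro hA'
          have hmemf : d ∈ M.filter (fun d => ¬ d.fst ∈ I) :=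
            Multiset.mem_filter.mpr ⟨hdM, hfstnI⟩
          exact (Multiset.countP_eq_zero.mp hjz d hmemf) hA'
        rcases Finset.mem_union.mp hsnAB with h | h
        · exact absurd h hsndnA
        · exact h
      obtain ⟨i0, hi0⟩ : I.Nonempty := Finset.card_pos.mp hIpos
      have hvmem : b0 ∈ p.support := hp.mem_support b0
      set q := p.rotate b0 hvmem with hq
      have hi_tail : i0 ∈ p.support.tail := by
        have := hcount i0
        exact List.count_pos_iff.mp (by omega)
      have hiq : i0 ∈ q.support := by
        have hrot := p.support_rotate b0 hvmem
        exact List.mem_of_mem_tail (hrot.perm.symm.mem_iff.mp hi_tail)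
      set w := q.takeUntil i0 hiq with hw
      have hb0S : b0 ∈ (↑B : Set V) := by simpa using hb0
      have hi0S : i0 ∉ (↑B : Set V) := by simpa using fun h => hIB' i0 hi0 h
      obtain ⟨d, hdw, hdfst, hdsnd⟩ := w.exists_boundary_dart (↑B : Set V) hb0S hi0S
      have hdq : d ∈ q.darts := q.darts_takeUntil_subset hiq hdw
      have hdp : d ∈ p.darts := (p.rotate_darts b0 hvmem).perm.mem_iff.mp hdq
      exact hdsnd (by simpa using hBclose d hdp (by simpa using hdfst))
    · omega
end

section
/- Let G be a directed graph on n vertices such that for every ordered pair of disjoint vertex subsets S, T with |S| = |T| = k (where k < n), there is a directed edge from S to T. Then G contains a directed path on at least n − 2k + 2 vertices. -/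
private lemma stmt16_aux {V : Type*} [Fintype V] [DecidableEq V] (n k : ℕ) (hk : 0 < k)
    (r : V → V → Prop)
    (h : ∀ S T : Finset V, Disjoint S T → S.card = k → T.card = k →
      ∃ s ∈ S, ∃ t ∈ T, r s t) :
    ∀ m : ℕ, ∀ S U : Finset V, ∀ Q : List V,
      2 * U.card + Q.length ≤ m →
      Disjoint S U →
      (∀ v ∈ Q, v ∉ S) →
      (∀ v ∈ Q, v ∉ U) →
      Q.Nodup → Q.Chain' (fun a b => r b a) →
      (∀ s ∈ S, ∀ u ∈ U, ¬ r s u) →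
      S.card + Q.length + U.card = n →
      k ≤ U.card →
      ∃ l : List V, l.Nodup ∧ l.Chain' r ∧ (n : ℤ) - 2 * k + 2 ≤ l.length := by
  intro m
  induction m with
  | zero =>
    intro S U Q hm _ _ _ _ _ _ _ hUk
    omega
  | succ m ih =>
    intro S U Q hm hdSU hQS hQU hnod hch hinv hcard hUk
    -- S has fewer than k elements
    have hS : S.card < k := by
      by_contra hS
      push_neg at hS
      obtain ⟨S', hS'sub, hS'card⟩ := Finset.exists_subset_card_eq hS
      obtain ⟨U', hU'sub, hU'card⟩ := Finset.exists_subset_card_eq hUk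
      obtain ⟨s, hs, u, hu, hr⟩ := h S' U'
        (Finset.disjoint_of_subset_left hS'sub (Finset.disjoint_of_subset_right hU'sub hdSU))
        hS'card hU'card
      exact hinv s (hS'sub hs) u (hU'sub hu) hr
    -- helper: push a vertex u ∈ U onto the stack, provided chain compatibility
    have push : ∀ u ∈ U, ((u :: Q).Chain' (fun a b => r b a)) →
        ∃ l : List V, l.Nodup ∧ l.Chain' r ∧ (n : ℤ) - 2 * k + 2 ≤ l.length := by
      intro u hu hch2
      have hUpos : 0 < U.card := lt_of_lt_of_le hk hUk
      have hUerase : (U.erase u).card = U.card - 1 := Finset.card_erase_of_mem hu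
      have hnod2 : (u :: Q).Nodup := by
        refine List.nodup_cons.2 ⟨fun hmem => hQU u hmem hu, hnod⟩
      by_cases hk2 : k ≤ (U.erase u).card
      · refine ih S (U.erase u) (u :: Q) (by simp [hUerase]; omega)
          (Finset.disjoint_of_subset_right (Finset.erase_subset u U) hdSU)
          ?_ ?_ hnod2 hch2
          (fun s hs v hv => hinv s hs v (Finset.mem_of_mem_erase hv))
          (by simp [hUerase]; omega) hk2
        · intro v hv
          rcases List.mem_cons.1 hv with rfl | hv
          · exact fun hvS => Finset.disjoint_left.1 hdSU hvS hu
          · exact hQS v hv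
        · intro v hv hvU
          rcases List.mem_cons.1 hv with rfl | hv
          · exact (Finset.notMem_erase v U) hvU
          · exact hQU v hv (Finset.mem_of_mem_erase hvU)
      · -- the unexplored set just dropped below k: conclude
        refine ⟨(u :: Q).reverse, List.nodup_reverse.2 hnod2, ?_, ?_⟩
        · show List.IsChain r _
          rw [List.isChain_reverse]
          exact hch2
        · have : (U.erase u).card = k - 1 := by omega
          simp only [List.length_reverse, List.length_cons]
          have hUcard : U.card = k := by omega
          push_cast
          omega
    rcases Q with _ | ⟨q, Q'⟩
    · -- empty stack: push any unexplored vertex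
      obtain ⟨u, hu⟩ := Finset.card_pos.1 (lt_of_lt_of_le hk hUk)
      exact push u hu (List.isChain_singleton u)
    · by_cases harc : ∃ u ∈ U, r q u
      · obtain ⟨u, hu, hru⟩ := harc
        exact push u hu (List.isChain_cons_cons.2 ⟨hru, hch⟩)
      · -- pop q into S
        push_neg at harc
        refine ih (insert q S) U Q' (by simp at hm ⊢; omega) ?_ ?_ ?_
          (List.nodup_cons.1 hnod).2 hch.tail ?_ ?_ hUk
        · exact Finset.disjoint_insert_left.2 ⟨hQU q (List.mem_cons_self), hdSU⟩
        · intro v hv hvS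
          rcases Finset.mem_insert.1 hvS with rfl | hvS
          · exact (List.nodup_cons.1 hnod).1 hv
          · exact hQS v (List.mem_cons_of_mem q hv) hvS
        · exact fun v hv => hQU v (List.mem_cons_of_mem q hv)
        · intro s hs v hv
          rcases Finset.mem_insert.1 hs with rfl | hs
          · exact harc v hv
          · exact hinv s hs v hv
        · simp at hcard ⊢
          rw [Finset.card_insert_of_notMem (hQS q (List.mem_cons_self))]
          omega

/-- If `G` is an `n`-vertex digraph (arc relation `r`) such that for every ordered pair
of disjoint `k`-element vertex sets `S, T` there is an arc from `S` to `T`, then `G`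
contains a directed path on at least `n − 2k + 2` vertices. -/
theorem stmt16 {V : Type*} [Fintype V] [DecidableEq V] (n k : ℕ)
    (hn : Fintype.card V = n) (hk : 0 < k) (hkn : k < n) (r : V → V → Prop)
    (h : ∀ S T : Finset V, Disjoint S T → S.card = k → T.card = k →
      ∃ s ∈ S, ∃ t ∈ T, r s t) :
    ∃ l : List V, l.Nodup ∧ l.Chain' r ∧ (n : ℤ) - 2 * k + 2 ≤ l.length := by
  refine stmt16_aux n k hk r h (2 * n) ∅ Finset.univ [] ?_ (by simp) (by simp) ?_
    List.nodup_nil List.isChain_nil (by simp) ?_ ?_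
  · simp [Finset.card_univ, hn]
  · simp
  · simp [Finset.card_univ, hn]
  · simp [Finset.card_univ, hn]; omega
end

section
/- Let G be a directed graph on n vertices such that for every ordered pair of disjoint vertex subsets S, T with |S| = |T| = k (where 4k ≤ n), there is a directed edge from S to T. Then G contains a directed cycle of length at least n − 4k + 4. -/
section Aux

variable {V : Type*} [Fintype V] [DecidableEq V]

/-- If there are no arcs from `A` to `B`, `A` and `B` are disjoint, and `B` has at least `k`
elements, then (under the hitting hypothesis) `A` has fewer than `k` elements. -/
lemma stmt17_small {k : ℕ} (r : V → V → Prop)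
    (h : ∀ S T : Finset V, Disjoint S T → S.card = k → T.card = k →
      ∃ s ∈ S, ∃ t ∈ T, r s t)
    (A B : Finset V) (hd : Disjoint A B) (hB : k ≤ B.card)
    (hno : ∀ a ∈ A, ∀ b ∈ B, ¬ r a b) : A.card < k := by
  by_contra hA
  push_neg at hA
  obtain ⟨A', hA's, hA'c⟩ := Finset.exists_subset_card_eq hA
  obtain ⟨B', hB's, hB'c⟩ := Finset.exists_subset_card_eq hB
  obtain ⟨s, hs, t, ht, hr⟩ := h A' B'
    (hd.mono hA's hB's) hA'c hB'c
  exact hno s (hA's hs) t (hB's ht) hr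

/-- DFS argument: there is a directed path (nodup chain) on at least `n - 2k + 2` vertices. -/
lemma stmt17_path {n k : ℕ}
    (hn : Fintype.card V = n) (hk : 0 < k) (hkn : 4 * k ≤ n) (r : V → V → Prop)
    (h : ∀ S T : Finset V, Disjoint S T → S.card = k → T.card = k →
      ∃ s ∈ S, ∃ t ∈ T, r s t) :
    ∃ P : List V, P.Nodup ∧ P.Chain' r ∧ n + 2 ≤ P.length + 2 * k := by
  -- invariant-preserving strong induction on the DFS measure
  suffices main : ∀ μ : ℕ, ∀ (S : Finset V) (U : List V),
      2 * (Finset.univ \ (S ∪ U.toFinset)).card + U.length ≤ μ →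
      U.Nodup → List.Chain' (flip r) U → (∀ x ∈ U, x ∉ S) →
      (∀ s ∈ S, ∀ t, t ∉ S → t ∉ U → ¬ r s t) → S.card < k →
      ∃ P : List V, P.Nodup ∧ P.Chain' r ∧ n + 2 ≤ P.length + 2 * k by
    refine main (2 * (Finset.univ \ ((∅ : Finset V) ∪ ([] : List V).toFinset)).card) ∅ [] ?_
      List.nodup_nil List.isChain_nil (by simp) (by simp) hk
    simp
  intro μ
  induction μ with
  | zero =>
    intro S U hμ hnd hch hdisj harc hS
    -- measure 0 : U = [] and T empty
    have hU : U = [] := List.length_eq_zero_iff.mp (by omega)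
    have hT : (Finset.univ \ (S ∪ U.toFinset)).card = 0 := by omega
    refine ⟨U.reverse, List.nodup_reverse.mpr hnd, List.isChain_reverse.mpr hch, ?_⟩
    have hsub : S ∪ U.toFinset ⊆ Finset.univ := Finset.subset_univ _
    have hcard : (Finset.univ \ (S ∪ U.toFinset)).card
        = n - (S ∪ U.toFinset).card := by
      rw [Finset.card_sdiff_of_subset hsub, Finset.card_univ, hn]
    have h1 : (S ∪ U.toFinset).card ≤ n := by
      rw [← hn, ← Finset.card_univ]; exact Finset.card_le_card hsub
    have h2 : (S ∪ U.toFinset).card = S.card + U.length := by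
      rw [Finset.card_union_of_disjoint, List.toFinset_card_of_nodup hnd]
      exact Finset.disjoint_left.mpr fun a ha hb => hdisj a (List.mem_toFinset.mp hb) ha
    simp only [List.length_reverse]
    omega
  | succ m ih =>
    intro S U hμ hnd hch hdisj harc hS
    obtain ⟨Tset, hTdef⟩ : ∃ T : Finset V, T = Finset.univ \ (S ∪ U.toFinset) := ⟨_, rfl⟩
    rw [← hTdef] at hμ
    -- disjointness and cardinality bookkeeping
    have hsub : S ∪ U.toFinset ⊆ Finset.univ := Finset.subset_univ _
    have hdSU : Disjoint S U.toFinset :=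
      Finset.disjoint_left.mpr fun a ha hb => hdisj a (List.mem_toFinset.mp hb) ha
    have hcard : Tset.card = n - (S.card + U.length) := by
      rw [hTdef, Finset.card_sdiff_of_subset hsub, Finset.card_univ, hn,
        Finset.card_union_of_disjoint hdSU, List.toFinset_card_of_nodup hnd]
    have hcard' : S.card + U.length ≤ n := by
      rw [← hn, ← Finset.card_univ, ← List.toFinset_card_of_nodup hnd,
        ← Finset.card_union_of_disjoint hdSU]
      exact Finset.card_le_card hsub
    by_cases hT : Tset.card < k
    · -- base case : few unvisited vertices, U is long
      refine ⟨U.reverse, List.nodup_reverse.mpr hnd, List.isChain_reverse.mpr hch, ?_⟩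
      simp only [List.length_reverse]
      omega
    push_neg at hT
    have hTmem : ∀ t ∈ Tset, t ∉ S ∧ t ∉ U := by
      intro t ht
      rw [hTdef, Finset.mem_sdiff, Finset.mem_union] at ht
      exact ⟨fun hc => ht.2 (Or.inl hc), fun hc => ht.2 (Or.inr (List.mem_toFinset.mpr hc))⟩
    -- pushing t : the new unvisited set is Tset.erase t
    have hpush : ∀ t : V, Finset.univ \ (S ∪ (t :: U).toFinset) = Tset.erase t := by
      intro t
      ext x
      simp only [hTdef, Finset.mem_sdiff, Finset.mem_union, Finset.mem_erase,
        Finset.mem_univ, true_and, List.toFinset_cons, Finset.mem_insert]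
      tauto
    rcases U with _ | ⟨u, U'⟩
    ·
      -- start a new path from any unvisited vertex
      obtain ⟨t, ht⟩ := Finset.card_pos.mp (by omega : 0 < Tset.card)
      have htc : (Finset.univ \ (S ∪ ([t] : List V).toFinset)).card = Tset.card - 1 := by
        rw [hpush t, Finset.card_erase_of_mem ht]
      refine ih S [t] ?_ (List.nodup_singleton t) (List.isChain_singleton t)
        (by intro x hx; rw [List.mem_singleton] at hx; exact hx ▸ (hTmem t ht).1)
        (fun s hs t' ht1 ht2 => harc s hs t' ht1 (by simp)) hS
      simp only [htc, List.length_singleton, List.length_nil] at *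
      omega
    · by_cases hex : ∃ t ∈ Tset, r u t
      · -- push
        obtain ⟨t, ht, hrt⟩ := hex
        have htc : (Finset.univ \ (S ∪ (t :: u :: U').toFinset)).card = Tset.card - 1 := by
          rw [hpush t, Finset.card_erase_of_mem ht]
        refine ih S (t :: u :: U') ?_ ?_ ?_ ?_ ?_ hS
        · simp only [htc, List.length_cons] at *
          omega
        · exact List.nodup_cons.mpr ⟨(hTmem t ht).2, hnd⟩
        · exact List.isChain_cons_cons.mpr ⟨hrt, hch⟩
        · intro x hx
          rcases List.mem_cons.mp hx with hx | hx
          · exact hx ▸ (hTmem t ht).1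
          · exact hdisj x hx
        · intro s hs t' ht1 ht2
          exact harc s hs t' ht1 (fun hc => ht2 (List.mem_cons_of_mem t hc))
      · -- pop
        push_neg at hex
        have hTeq : Finset.univ \ (insert u S ∪ U'.toFinset) = Tset := by
          ext x
          simp only [hTdef, Finset.mem_sdiff, Finset.mem_union, Finset.mem_insert,
            Finset.mem_univ, true_and, List.toFinset_cons]
          tauto
        have huU' : u ∉ U' := (List.nodup_cons.mp hnd).1
        have harc' : ∀ s ∈ insert u S, ∀ t, t ∉ insert u S → t ∉ U' → ¬ r s t := by
          intro s hs t ht1 ht2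
          rw [Finset.mem_insert] at hs
          rw [Finset.mem_insert, not_or] at ht1
          rcases hs with rfl | hs
          · refine hex t ?_
            rw [hTdef, Finset.mem_sdiff, Finset.mem_union]
            refine ⟨Finset.mem_univ t, fun hc => ?_⟩
            rcases hc with hc | hc
            · exact ht1.2 hc
            · rcases List.mem_cons.mp (List.mem_toFinset.mp hc) with rfl | hc
              · exact ht1.1 rfl
              · exact ht2 hc
          · exact harc s hs t ht1.2 fun hc => by
              rcases List.mem_cons.mp hc with rfl | hc
              · exact ht1.1 rfl
              · exact ht2 hc
        have hScard : (insert u S).card < k := by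
          refine stmt17_small r h (insert u S) Tset ?_ hT ?_
          · refine Finset.disjoint_left.mpr fun a ha hb => ?_
            rcases Finset.mem_insert.mp ha with rfl | ha
            · exact (hTmem a hb).2 (List.mem_cons_self)
            · exact (hTmem a hb).1 ha
          · intro a ha b hb
            exact harc' a ha b
              (fun hc => ((hTmem b hb).1 (Finset.mem_insert.mp hc |>.elim
                (fun hh => absurd ((hh ▸ hb : u ∈ Tset)) (fun hz => (hTmem u hz).2 (List.mem_cons_self))) id)))
              (fun hc => (hTmem b hb).2 (List.mem_cons_of_mem u hc))
        refine ih (insert u S) U' ?_ (List.nodup_cons.mp hnd).2 (List.isChain_cons.mp hch).2 ?_ harc' hScard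
        · rw [hTeq]
          simp only [List.length_cons] at hμ
          omega
        · intro x hx
          rw [Finset.mem_insert, not_or]
          exact ⟨fun hc => huU' (hc ▸ hx), hdisj x (List.mem_cons_of_mem u hx)⟩

end Aux

/-- If `G` is an `n`-vertex digraph (arc relation `r`) such that for every ordered pair
of disjoint `k`-element vertex sets `S, T` (where `4k ≤ n`) there is an arc from `S` to
`T`, then `G` contains a directed cycle of length at least `n − 4k + 4`. -/
theorem stmt17 {V : Type*} [Fintype V] [DecidableEq V] (n k : ℕ)
    (hn : Fintype.card V = n) (hk : 0 < k) (hkn : 4 * k ≤ n) (r : V → V → Prop)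
    (h : ∀ S T : Finset V, Disjoint S T → S.card = k → T.card = k →
      ∃ s ∈ S, ∃ t ∈ T, r s t) :
    ∃ (l : List V) (hne : l ≠ []), l.Nodup ∧ l.Chain' r ∧
      r (l.getLast hne) (l.head hne) ∧ (n : ℤ) - 4 * k + 4 ≤ l.length := by
  obtain ⟨P, hPnd, hPch, hPlen⟩ := stmt17_path hn hk hkn r h
  set m := P.length with hm
  have hm2 : 2 * k + 2 ≤ m := by omega
  -- first k and last k vertices of the path
  have htake_len : (P.take k).length = k := by
    rw [List.length_take]; omega
  have hdrop_len : (P.drop (m - k)).length = k := by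
    rw [List.length_drop]; omega
  have htake_nd : (P.take k).Nodup := hPnd.sublist (List.take_sublist _ _)
  have hdrop_nd : (P.drop (m - k)).Nodup := hPnd.sublist (List.drop_sublist _ _)
  have hldisj : List.Disjoint (P.take (m - k)) (P.drop (m - k)) := by
    have := hPnd
    rw [← List.take_append_drop (m - k) P, List.nodup_append] at this
    exact fun a ha hb => this.2.2 a ha a hb rfl
  have htk : P.take k = (P.take (m - k)).take k := by
    rw [List.take_take, min_eq_left (by omega)]
  have hdisjF : Disjoint (P.drop (m - k)).toFinset (P.take k).toFinset := by
    refine Finset.disjoint_left.mpr fun a ha hb => ?_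
    rw [List.mem_toFinset] at ha hb
    rw [htk] at hb
    exact hldisj (List.take_subset _ _ hb) ha
  obtain ⟨s, hs, t, ht, hrst⟩ := h (P.drop (m - k)).toFinset (P.take k).toFinset hdisjF
    (by rw [List.toFinset_card_of_nodup hdrop_nd, hdrop_len])
    (by rw [List.toFinset_card_of_nodup htake_nd, htake_len])
  rw [List.mem_toFinset] at hs ht
  obtain ⟨j, hj, hsj⟩ := List.getElem_of_mem hs
  obtain ⟨i, hi, hti⟩ := List.getElem_of_mem ht
  rw [hdrop_len] at hj
  rw [htake_len] at hi
  have hjP : j < (P.drop (m - k)).length := by rw [hdrop_len]; omega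
  have hiP : i < (P.take k).length := by rw [htake_len]; omega
  -- global indices
  set is := m - k + j with his
  have hsP : P[is]'(by omega) = s := by
    rw [← hsj]; exact List.getElem_drop.symm
  have htP : P[i]'(by omega) = t := by
    rw [← hti]; exact List.getElem_take.symm
  have hilt : i < is := by omega
  have hislt : is < m := by omega
  -- the cycle : segment of P from index i to index is
  refine ⟨(P.drop i).take (is - i + 1), ?_, ?_, ?_, ?_, ?_⟩
  · have : ((P.drop i).take (is - i + 1)).length = is - i + 1 := by
      rw [List.length_take, List.length_drop]; omega
    intro hc
    rw [hc] at this
    simp at this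
  all_goals
    have hinf : (P.drop i).take (is - i + 1) <:+: P :=
      (List.take_prefix _ _).isInfix.trans (List.drop_suffix i P).isInfix
  · exact hPnd.sublist hinf.sublist
  · exact hPch.infix hinf
  all_goals
    have hlen : ((P.drop i).take (is - i + 1)).length = is - i + 1 := by
      rw [List.length_take, List.length_drop]; omega
  · rw [List.getLast_eq_getElem, List.head_eq_getElem]
    have h1 : ((P.drop i).take (is - i + 1))[((P.drop i).take (is - i + 1)).length - 1]'(by omega)
        = P[is]'(by omega) := by
      simp only [hlen]
      rw [List.getElem_take, List.getElem_drop]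
      congr 1
      omega
    have h2 : ((P.drop i).take (is - i + 1))[0]'(by omega) = P[i]'(by omega) := by
      rw [List.getElem_take, List.getElem_drop]
      congr 1
    rw [h1, h2, hsP, htP]
    exact hrst
  · rw [hlen]
    omega
end
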